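/- Let f be an FIF on SG with vertical scaling factors d₁,d₂,d₃ ∈ (−1,1). Then sup_m E_m(f) < ∞ if and only if either E₁(f) = E₀(f) or d₁² + d₂² + d₃² < 3/5. Moreover: if E₁(f) = E₀(f), then E_m(f) = E₀(f) for all m and f is harmonic; and if d₁² + d₂² + d₃² < 3/5, then lim_{m→∞} E_m(f) = E₀(f) + (E₁(f) − E₀(f)) / (1 − (5/3)(d₁² + d₂² + d₃²)). -/
import Mathlib


open Finset Filter

noncomputable section

/-- Points in the plane. -/
abbrev Pt := Fin 2 → ℝ

/-- The three contraction maps `P_i(x) = (x + q_i)/2`. -/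
def Pmap (q : Fin 3 → Pt) (i : Fin 3) (x : Pt) : Pt := (x + q i) / 2

/-- `Pw q m ω = P_{ω 0} ∘ P_{ω 1} ∘ ⋯ ∘ P_{ω (m-1)}` for a word `ω` of length `m`. -/
def Pw (q : Fin 3 → Pt) : (m : ℕ) → (Fin m → Fin 3) → Pt → Pt
  | 0, _, x => x
  | m + 1, ω, x => Pmap q (ω 0) (Pw q m (fun k => ω k.succ) x)

/-- The level-`m` vertex set `V_m`. -/
def V (q : Fin 3 → Pt) (m : ℕ) : Set Pt :=
  {x | ∃ ω : Fin m → Fin 3, ∃ i : Fin 3, x = Pw q m ω (q i)}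

/-- `V_* = ⋃ m, V_m`. -/
def Vstar (q : Fin 3 → Pt) : Set Pt := ⋃ m, V q m

/-- The Sierpinski gasket, as the closure of `V_*`. -/
def SG (q : Fin 3 → Pt) : Set Pt := closure (Vstar q)

/-- The level-`m` graph energy. -/
def energy (q : Fin 3 → Pt) (m : ℕ) (u : Pt → ℝ) : ℝ :=
  (5/3 : ℝ)^m * ∑ ω : Fin m → Fin 3,
    ∑ p ∈ Finset.univ.filter (fun p : Fin 3 × Fin 3 => p.1 < p.2),
      (u (Pw q m ω (q p.1)) - u (Pw q m ω (q p.2)))^2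

/-- The level-`m` bilinear graph energy. -/
def energyBil (q : Fin 3 → Pt) (m : ℕ) (u v : Pt → ℝ) : ℝ :=
  (5/3 : ℝ)^m * ∑ ω : Fin m → Fin 3,
    ∑ p ∈ Finset.univ.filter (fun p : Fin 3 × Fin 3 => p.1 < p.2),
      (u (Pw q m ω (q p.1)) - u (Pw q m ω (q p.2))) *
        (v (Pw q m ω (q p.1)) - v (Pw q m ω (q p.2)))

open scoped Classical in
/-- The level-`m` graph Laplacian at `x`. -/
def graphLap (q : Fin 3 → Pt) (m : ℕ) (u : Pt → ℝ) (x : Pt) : ℝ :=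
  ∑ ω : Fin m → Fin 3,
    ∑ p ∈ Finset.univ.filter (fun p : Fin 3 × Fin 3 => p.1 ≠ p.2 ∧ Pw q m ω (q p.1) = x),
      (u (Pw q m ω (q p.2)) - u x)

/-- A function is harmonic on `SG` if it is continuous on `SG` and satisfies
the `1/5-2/5` rule. -/
def IsHarmonic (q : Fin 3 → Pt) (h : Pt → ℝ) : Prop :=
  ContinuousOn h (SG q) ∧
  ∀ (m : ℕ) (ω : Fin m → Fin 3) (i j k : Fin 3), i ≠ j → j ≠ k → i ≠ k →
    h (Pw q m ω (Pmap q i (q j))) =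
      2/5 * h (Pw q m ω (q i)) + 2/5 * h (Pw q m ω (q j)) + 1/5 * h (Pw q m ω (q k))

/-- `f` is a fractal interpolation function on `SG` with vertical scaling factors `d i`. -/
def IsFIF (q : Fin 3 → Pt) (d : Fin 3 → ℝ) (f : Pt → ℝ) : Prop :=
  ContinuousOn f (SG q) ∧
  ∃ h : Fin 3 → Pt → ℝ, (∀ i, IsHarmonic q (h i)) ∧
    ∀ i, ∀ x ∈ SG q, f (Pmap q i x) = d i * f x + h i x


lemma Pmap_comm (q : Fin 3 → Pt) (i j : Fin 3) : Pmap q i (q j) = Pmap q j (q i) := by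
  simp [Pmap, add_comm]

lemma Pmap_self (q : Fin 3 → Pt) (i : Fin 3) : Pmap q i (q i) = q i := by
  funext k; simp [Pmap]

lemma Pw_cons (q : Fin 3 → Pt) (m : ℕ) (i : Fin 3) (ω : Fin m → Fin 3) (x : Pt) :
    Pw q (m+1) (Fin.cons i ω) x = Pmap q i (Pw q m ω x) := by
  simp [Pw]

lemma Pw_succ (q : Fin 3 → Pt) (m : ℕ) (ω : Fin (m+1) → Fin 3) (x : Pt) :
    Pw q (m+1) ω x = Pmap q (ω 0) (Pw q m (fun k => ω k.succ) x) := rfl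

lemma Pw_snoc (q : Fin 3 → Pt) : ∀ (m : ℕ) (ω : Fin m → Fin 3) (j : Fin 3) (x : Pt),
    Pw q (m+1) (Fin.snoc ω j) x = Pw q m ω (Pmap q j x) := by
  intro m
  induction m with
  | zero => intro ω j x; simp [Pw, Fin.snoc]
  | succ n ih =>
    intro ω j x
    rw [Pw_succ q (n+1) (Fin.snoc ω j) x, Pw_succ q n ω (Pmap q j x)]
    have h0 : (Fin.snoc (α := fun _ => Fin 3) ω j) 0 = ω 0 := by
      rw [show (0 : Fin (n+1+1)) = Fin.castSucc 0 by rfl, Fin.snoc_castSucc]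
    have h1 : (fun k : Fin (n+1) => (Fin.snoc (α := fun _ => Fin 3) ω j) k.succ) = Fin.snoc (fun k : Fin n => ω k.succ) j := by
      funext k
      rcases Fin.eq_castSucc_or_eq_last k with ⟨k', hk⟩ | hk
      · subst hk
        rw [show (Fin.castSucc k').succ = Fin.castSucc k'.succ by rfl, Fin.snoc_castSucc,
          Fin.snoc_castSucc]
      · subst hk
        rw [show (Fin.last n).succ = Fin.last (n+1) by rfl, Fin.snoc_last, Fin.snoc_last]
    rw [h0, h1, ih]

lemma Pw_mem_SG (q : Fin 3 → Pt) (m : ℕ) (ω : Fin m → Fin 3) (i : Fin 3) :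
    Pw q m ω (q i) ∈ SG q :=
  subset_closure (Set.mem_iUnion.2 ⟨m, ⟨ω, i, rfl⟩⟩)

lemma Pw_mid_mem_SG (q : Fin 3 → Pt) (m : ℕ) (ω : Fin m → Fin 3) (j i : Fin 3) :
    Pw q m ω (Pmap q j (q i)) ∈ SG q := by
  rw [← Pw_snoc]; exact Pw_mem_SG q (m+1) _ i

lemma pairSum (g : Fin 3 × Fin 3 → ℝ) :
    ∑ p ∈ Finset.univ.filter (fun p : Fin 3 × Fin 3 => p.1 < p.2), g p
      = g (0,1) + g (0,2) + g (1,2) := by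
  have : Finset.univ.filter (fun p : Fin 3 × Fin 3 => p.1 < p.2)
      = {(0,1), (0,2), (1,2)} := by decide
  rw [this]
  rw [Finset.sum_insert (by decide), Finset.sum_insert (by decide), Finset.sum_singleton]
  ring

def Qf (u v w : ℝ) : ℝ := 4*(u^2+v^2+w^2) - 2*(u*v+u*w+v*w)

lemma Qf_nonneg (u v w : ℝ) : 0 ≤ Qf u v w := by unfold Qf; nlinarith [sq_nonneg (u-v), sq_nonneg (u-w), sq_nonneg (v-w), sq_nonneg u, sq_nonneg v, sq_nonneg w]

lemma Qf_eq_zero {u v w : ℝ} (h : Qf u v w = 0) : u = 0 ∧ v = 0 ∧ w = 0 := by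
  unfold Qf at h
  refine ⟨?_, ?_, ?_⟩ <;>
    nlinarith [sq_nonneg (u-v), sq_nonneg (u-w), sq_nonneg (v-w), sq_nonneg u, sq_nonneg v, sq_nonneg w]

lemma cell_id (a b c x y z : ℝ) :
    (5/3) * ((a-x)^2+(a-y)^2+(x-y)^2 + ((x-b)^2+(x-z)^2+(b-z)^2) + ((y-z)^2+(y-c)^2+(z-c)^2))
      = ((a-b)^2+(a-c)^2+(b-c)^2)
        + (5/3) * Qf (x-(2*a+2*b+c)/5) (y-(2*a+2*c+b)/5) (z-(2*b+2*c+a)/5) := by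
  unfold Qf; ring

lemma cellBil_id (a b c x y z A B C : ℝ) :
    (5/3) * ((a-x)*(A-(2*A+2*B+C)/5)+(a-y)*(A-(2*A+2*C+B)/5)+(x-y)*((2*A+2*B+C)/5-(2*A+2*C+B)/5)
      + ((x-b)*((2*A+2*B+C)/5-B)+(x-z)*((2*A+2*B+C)/5-(2*B+2*C+A)/5)+(b-z)*(B-(2*B+2*C+A)/5))
      + ((y-z)*((2*A+2*C+B)/5-(2*B+2*C+A)/5)+(y-c)*((2*A+2*C+B)/5-C)+(z-c)*((2*B+2*C+A)/5-C)))
      = (a-b)*(A-B)+(a-c)*(A-C)+(b-c)*(B-C) := by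
  ring

lemma sum_snoc (m : ℕ) (F : (Fin (m+1) → Fin 3) → ℝ) :
    ∑ ω : Fin (m+1) → Fin 3, F ω
      = ∑ ω : Fin m → Fin 3, ∑ j : Fin 3, F (Fin.snoc ω j) := by
  rw [← Equiv.sum_comp (Fin.snocEquiv (fun _ => Fin 3)) F, Fintype.sum_prod_type,
    Finset.sum_comm]
  rfl

lemma sum_cons (m : ℕ) (F : (Fin (m+1) → Fin 3) → ℝ) :
    ∑ ω : Fin (m+1) → Fin 3, F ω
      = ∑ i : Fin 3, ∑ ω : Fin m → Fin 3, F (Fin.cons i ω) := by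
  rw [← Equiv.sum_comp (Fin.consEquiv (fun _ => Fin 3)) F, Fintype.sum_prod_type]
  rfl

/-- midpoint deviation from the harmonic value -/

def dev (q : Fin 3 → Pt) (m : ℕ) (ω : Fin m → Fin 3) (u : Pt → ℝ) (i j k : Fin 3) : ℝ :=
  u (Pw q m ω (Pmap q i (q j)))
    - (2 * u (Pw q m ω (q i)) + 2 * u (Pw q m ω (q j)) + u (Pw q m ω (q k))) / 5

lemma cell_step (q : Fin 3 → Pt) (m : ℕ) (ω : Fin m → Fin 3) (u : Pt → ℝ) :
    (5/3 : ℝ) * ∑ j : Fin 3, ∑ p ∈ Finset.univ.filter (fun p : Fin 3 × Fin 3 => p.1 < p.2),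
        (u (Pw q m ω (Pmap q j (q p.1))) - u (Pw q m ω (Pmap q j (q p.2))))^2
      = (∑ p ∈ Finset.univ.filter (fun p : Fin 3 × Fin 3 => p.1 < p.2),
          (u (Pw q m ω (q p.1)) - u (Pw q m ω (q p.2)))^2)
        + (5/3) * Qf (dev q m ω u 0 1 2) (dev q m ω u 0 2 1) (dev q m ω u 1 2 0) := by
  rw [Fin.sum_univ_three, pairSum, pairSum, pairSum, pairSum,
    Pmap_self q 0, Pmap_self q 1, Pmap_self q 2,
    Pmap_comm q 1 0, Pmap_comm q 2 0, Pmap_comm q 2 1]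
  unfold dev Qf
  ring

lemma energy_succ (q : Fin 3 → Pt) (m : ℕ) (u : Pt → ℝ) :
    energy q (m+1) u = energy q m u
      + (5/3 : ℝ)^(m+1) * ∑ ω : Fin m → Fin 3,
          Qf (dev q m ω u 0 1 2) (dev q m ω u 0 2 1) (dev q m ω u 1 2 0) := by
  unfold energy
  rw [sum_snoc]
  have hterm : ∀ ω : Fin m → Fin 3,
      (∑ j : Fin 3, ∑ p ∈ Finset.univ.filter (fun p : Fin 3 × Fin 3 => p.1 < p.2),
        (u (Pw q (m+1) (Fin.snoc ω j) (q p.1)) - u (Pw q (m+1) (Fin.snoc ω j) (q p.2)))^2)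
      = ∑ j : Fin 3, ∑ p ∈ Finset.univ.filter (fun p : Fin 3 × Fin 3 => p.1 < p.2),
        (u (Pw q m ω (Pmap q j (q p.1))) - u (Pw q m ω (Pmap q j (q p.2))))^2 := by
    intro ω
    refine Finset.sum_congr rfl fun j _ => Finset.sum_congr rfl fun p _ => ?_
    rw [Pw_snoc, Pw_snoc]
  calc (5/3 : ℝ)^(m+1) * ∑ ω : Fin m → Fin 3, ∑ j : Fin 3,
        ∑ p ∈ Finset.univ.filter (fun p : Fin 3 × Fin 3 => p.1 < p.2),
          (u (Pw q (m+1) (Fin.snoc ω j) (q p.1)) - u (Pw q (m+1) (Fin.snoc ω j) (q p.2)))^2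
      = (5/3 : ℝ)^m * ∑ ω : Fin m → Fin 3, (5/3 : ℝ) * ∑ j : Fin 3,
          ∑ p ∈ Finset.univ.filter (fun p : Fin 3 × Fin 3 => p.1 < p.2),
            (u (Pw q m ω (Pmap q j (q p.1))) - u (Pw q m ω (Pmap q j (q p.2))))^2 := by
        rw [Finset.mul_sum, Finset.mul_sum]
        refine Finset.sum_congr rfl fun ω _ => ?_
        rw [hterm ω]; ring
    _ = (5/3 : ℝ)^m * ∑ ω : Fin m → Fin 3,
          ((∑ p ∈ Finset.univ.filter (fun p : Fin 3 × Fin 3 => p.1 < p.2),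
            (u (Pw q m ω (q p.1)) - u (Pw q m ω (q p.2)))^2)
          + (5/3) * Qf (dev q m ω u 0 1 2) (dev q m ω u 0 2 1) (dev q m ω u 1 2 0)) := by
        refine congrArg _ (Finset.sum_congr rfl fun ω _ => cell_step q m ω u)
    _ = _ := by
        rw [Finset.sum_add_distrib, mul_add, Finset.mul_sum, Finset.mul_sum, Finset.mul_sum]
        congr 1
        refine Finset.sum_congr rfl fun ω _ => ?_
        ring

lemma dev_harm (q : Fin 3 → Pt) {h : Pt → ℝ} (hh : IsHarmonic q h)
    (m : ℕ) (ω : Fin m → Fin 3) (i j k : Fin 3) (hij : i ≠ j) (hjk : j ≠ k) (hik : i ≠ k) :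
    dev q m ω h i j k = 0 := by
  unfold dev
  rw [hh.2 m ω i j k hij hjk hik]
  ring

lemma energy_succ_harm (q : Fin 3 → Pt) {h : Pt → ℝ} (hh : IsHarmonic q h) (m : ℕ) :
    energy q (m+1) h = energy q m h := by
  rw [energy_succ]
  have : ∀ ω : Fin m → Fin 3,
      Qf (dev q m ω h 0 1 2) (dev q m ω h 0 2 1) (dev q m ω h 1 2 0) = 0 := by
    intro ω
    rw [dev_harm q hh m ω 0 1 2 (by decide) (by decide) (by decide),
      dev_harm q hh m ω 0 2 1 (by decide) (by decide) (by decide),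
      dev_harm q hh m ω 1 2 0 (by decide) (by decide) (by decide)]
    unfold Qf; ring
  rw [Finset.sum_congr rfl fun ω _ => this ω]
  simp

lemma cellBil_step (q : Fin 3 → Pt) (m : ℕ) (ω : Fin m → Fin 3) (u : Pt → ℝ)
    {h : Pt → ℝ} (hh : IsHarmonic q h) :
    (5/3 : ℝ) * ∑ j : Fin 3, ∑ p ∈ Finset.univ.filter (fun p : Fin 3 × Fin 3 => p.1 < p.2),
        (u (Pw q m ω (Pmap q j (q p.1))) - u (Pw q m ω (Pmap q j (q p.2)))) *
          (h (Pw q m ω (Pmap q j (q p.1))) - h (Pw q m ω (Pmap q j (q p.2))))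
      = ∑ p ∈ Finset.univ.filter (fun p : Fin 3 × Fin 3 => p.1 < p.2),
          (u (Pw q m ω (q p.1)) - u (Pw q m ω (q p.2))) *
            (h (Pw q m ω (q p.1)) - h (Pw q m ω (q p.2))) := by
  rw [Fin.sum_univ_three, pairSum, pairSum, pairSum, pairSum,
    Pmap_self q 0, Pmap_self q 1, Pmap_self q 2,
    Pmap_comm q 1 0, Pmap_comm q 2 0, Pmap_comm q 2 1,
    hh.2 m ω 0 1 2 (by decide) (by decide) (by decide),
    hh.2 m ω 0 2 1 (by decide) (by decide) (by decide),
    hh.2 m ω 1 2 0 (by decide) (by decide) (by decide)]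
  ring

lemma energyBil_succ_harm (q : Fin 3 → Pt) (u : Pt → ℝ) {h : Pt → ℝ}
    (hh : IsHarmonic q h) (m : ℕ) :
    energyBil q (m+1) u h = energyBil q m u h := by
  unfold energyBil
  rw [sum_snoc]
  have hterm : ∀ ω : Fin m → Fin 3,
      (∑ j : Fin 3, ∑ p ∈ Finset.univ.filter (fun p : Fin 3 × Fin 3 => p.1 < p.2),
        (u (Pw q (m+1) (Fin.snoc ω j) (q p.1)) - u (Pw q (m+1) (Fin.snoc ω j) (q p.2))) *
          (h (Pw q (m+1) (Fin.snoc ω j) (q p.1)) - h (Pw q (m+1) (Fin.snoc ω j) (q p.2))))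
      = ∑ j : Fin 3, ∑ p ∈ Finset.univ.filter (fun p : Fin 3 × Fin 3 => p.1 < p.2),
        (u (Pw q m ω (Pmap q j (q p.1))) - u (Pw q m ω (Pmap q j (q p.2)))) *
          (h (Pw q m ω (Pmap q j (q p.1))) - h (Pw q m ω (Pmap q j (q p.2)))) := by
    intro ω
    refine Finset.sum_congr rfl fun j _ => Finset.sum_congr rfl fun p _ => ?_
    rw [Pw_snoc, Pw_snoc]
  rw [Finset.mul_sum, Finset.mul_sum]
  refine Finset.sum_congr rfl fun ω _ => ?_
  have := cellBil_step q m ω u hh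
  rw [hterm ω]
  rw [show ((5/3:ℝ)^(m+1)) = (5/3:ℝ)^m * (5/3) from by ring, mul_assoc, this]

lemma energy_fif_step (q : Fin 3 → Pt) (d : Fin 3 → ℝ) (f : Pt → ℝ)
    (h : Fin 3 → Pt → ℝ)
    (hfif : ∀ i, ∀ x ∈ SG q, f (Pmap q i x) = d i * f x + h i x) (m : ℕ) :
    energy q (m+1) f = (5/3) * ∑ i : Fin 3,
      ((d i)^2 * energy q m f + 2 * d i * energyBil q m f (h i) + energy q m (h i)) := by
  have key : ∀ (i : Fin 3) (ω : Fin m → Fin 3),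
      (∑ p ∈ Finset.univ.filter (fun p : Fin 3 × Fin 3 => p.1 < p.2),
        (f (Pw q (m+1) (Fin.cons i ω) (q p.1)) - f (Pw q (m+1) (Fin.cons i ω) (q p.2)))^2)
      = (d i)^2 * (∑ p ∈ Finset.univ.filter (fun p : Fin 3 × Fin 3 => p.1 < p.2),
            (f (Pw q m ω (q p.1)) - f (Pw q m ω (q p.2)))^2)
        + 2 * d i * (∑ p ∈ Finset.univ.filter (fun p : Fin 3 × Fin 3 => p.1 < p.2),
            (f (Pw q m ω (q p.1)) - f (Pw q m ω (q p.2))) *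
              (h i (Pw q m ω (q p.1)) - h i (Pw q m ω (q p.2))))
        + (∑ p ∈ Finset.univ.filter (fun p : Fin 3 × Fin 3 => p.1 < p.2),
            (h i (Pw q m ω (q p.1)) - h i (Pw q m ω (q p.2)))^2) := by
    intro i ω
    rw [Finset.mul_sum, Finset.mul_sum, ← Finset.sum_add_distrib, ← Finset.sum_add_distrib]
    refine Finset.sum_congr rfl fun p _ => ?_
    rw [Pw_cons, Pw_cons, hfif i _ (Pw_mem_SG q m ω p.1), hfif i _ (Pw_mem_SG q m ω p.2)]
    ring
  have inner : ∀ i : Fin 3,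
      (5/3 : ℝ)^(m+1) * ∑ ω : Fin m → Fin 3,
        ∑ p ∈ Finset.univ.filter (fun p : Fin 3 × Fin 3 => p.1 < p.2),
          (f (Pw q (m+1) (Fin.cons i ω) (q p.1)) - f (Pw q (m+1) (Fin.cons i ω) (q p.2)))^2
      = (5/3) * ((d i)^2 * energy q m f + 2 * d i * energyBil q m f (h i)
          + energy q m (h i)) := by
    intro i
    rw [Finset.sum_congr rfl fun ω _ => key i ω, Finset.sum_add_distrib,
      Finset.sum_add_distrib, ← Finset.mul_sum, ← Finset.mul_sum]
    unfold energy energyBil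
    ring
  show (5/3 : ℝ)^(m+1) * ∑ ω : Fin (m+1) → Fin 3,
      ∑ p ∈ Finset.univ.filter (fun p : Fin 3 × Fin 3 => p.1 < p.2),
        (f (Pw q (m+1) ω (q p.1)) - f (Pw q (m+1) ω (q p.2)))^2 = _
  rw [sum_cons, Finset.mul_sum, Finset.sum_congr rfl fun i _ => inner i, ← Finset.mul_sum]

/-- characterization of finiteness of the energy of an FIF. -/
theorem stmt_4 (q : Fin 3 → Pt) (hq : AffineIndependent ℝ q)
    (d : Fin 3 → ℝ) (hd : ∀ i, d i ∈ Set.Ioo (-1 : ℝ) 1)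
    (f : Pt → ℝ) (hf : IsFIF q d f) :
    (BddAbove (Set.range fun m => energy q m f) ↔
      energy q 1 f = energy q 0 f ∨ (d 0)^2 + (d 1)^2 + (d 2)^2 < 3/5) ∧
    (energy q 1 f = energy q 0 f →
      (∀ m : ℕ, energy q m f = energy q 0 f) ∧ IsHarmonic q f) ∧
    ((d 0)^2 + (d 1)^2 + (d 2)^2 < 3/5 →
      Filter.Tendsto (fun m => energy q m f) Filter.atTop
        (nhds (energy q 0 f +
          (energy q 1 f - energy q 0 f) / (1 - (5/3) * ((d 0)^2 + (d 1)^2 + (d 2)^2))))) := by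
  obtain ⟨hcont, h, hharm, hrel⟩ := hf
  set ρ : ℝ := (5/3) * ((d 0)^2 + (d 1)^2 + (d 2)^2) with hρ
  have hρ0 : 0 ≤ ρ := by positivity
  have hBconst : ∀ (i : Fin 3) (m : ℕ), energyBil q m f (h i) = energyBil q 0 f (h i) := by
    intro i m
    induction m with
    | zero => rfl
    | succ n ih => rw [energyBil_succ_harm q f (hharm i) n, ih]
  have hHconst : ∀ (i : Fin 3) (m : ℕ), energy q m (h i) = energy q 0 (h i) := by
    intro i m
    induction m with
    | zero => rfl
    | succ n ih => rw [energy_succ_harm q (hharm i) n, ih]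
  have hrec : ∀ m : ℕ, energy q (m+1) f = ρ * energy q m f
      + (5/3) * ∑ i : Fin 3, (2 * d i * energyBil q 0 f (h i) + energy q 0 (h i)) := by
    intro m
    rw [energy_fif_step q d f h hrel m]
    simp only [hBconst, hHconst]
    rw [hρ, Fin.sum_univ_three, Fin.sum_univ_three]
    ring
  have hdiff : ∀ m : ℕ, energy q (m+1) f - energy q m f
      = ρ^m * (energy q 1 f - energy q 0 f) := by
    intro m
    induction m with
    | zero => simp
    | succ n ih =>
      have h2 : energy q (n+2) f - energy q (n+1) f
          = ρ * (energy q (n+1) f - energy q n f) := by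
        rw [hrec (n+1), hrec n]; ring
      rw [h2, ih]; ring
  have hET : ∀ m : ℕ, energy q m f = energy q 0 f
      + (∑ k ∈ Finset.range m, ρ^k) * (energy q 1 f - energy q 0 f) := by
    intro m
    induction m with
    | zero => simp
    | succ n ih =>
      have h2 : energy q (n+1) f = energy q n f + ρ^n * (energy q 1 f - energy q 0 f) := by
        have := hdiff n; linarith
      rw [h2, ih, Finset.sum_range_succ]; ring
  have hδ0 : 0 ≤ energy q 1 f - energy q 0 f := by
    have h1 := energy_succ q 0 f
    have hQ : (0:ℝ) ≤ ∑ ω : Fin 0 → Fin 3,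
        Qf (dev q 0 ω f 0 1 2) (dev q 0 ω f 0 2 1) (dev q 0 ω f 1 2 0) :=
      Finset.sum_nonneg fun ω _ => Qf_nonneg _ _ _
    have hp : (0:ℝ) ≤ (5/3 : ℝ)^(0+1) * ∑ ω : Fin 0 → Fin 3,
        Qf (dev q 0 ω f 0 1 2) (dev q 0 ω f 0 2 1) (dev q 0 ω f 1 2 0) :=
      mul_nonneg (by norm_num) hQ
    linarith
  -- Part 2
  have part2 : energy q 1 f = energy q 0 f →
      (∀ m : ℕ, energy q m f = energy q 0 f) ∧ IsHarmonic q f := by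
    intro heq
    have hall : ∀ m : ℕ, energy q m f = energy q 0 f := by
      intro m; rw [hET m, heq]; ring
    refine ⟨hall, hcont, ?_⟩
    intro m ω i j k hij hjk hik
    have hz : dev q m ω f 0 1 2 = 0 ∧ dev q m ω f 0 2 1 = 0 ∧ dev q m ω f 1 2 0 = 0 := by
      have hE : energy q (m+1) f = energy q m f := by rw [hall (m+1), hall m]
      have h1 := energy_succ q m f
      have hp : (0:ℝ) < (5/3 : ℝ)^(m+1) := by positivity
      have hsum : ∑ ω' : Fin m → Fin 3,
          Qf (dev q m ω' f 0 1 2) (dev q m ω' f 0 2 1) (dev q m ω' f 1 2 0) = 0 := by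
        have hmul : (5/3 : ℝ)^(m+1) * ∑ ω' : Fin m → Fin 3,
            Qf (dev q m ω' f 0 1 2) (dev q m ω' f 0 2 1) (dev q m ω' f 1 2 0) = 0 := by
          linarith
        rcases mul_eq_zero.1 hmul with h' | h'
        · exact absurd h' (ne_of_gt hp)
        · exact h'
      have hQ0 : Qf (dev q m ω f 0 1 2) (dev q m ω f 0 2 1) (dev q m ω f 1 2 0) = 0 :=
        (Finset.sum_eq_zero_iff_of_nonneg (fun ω' _ => Qf_nonneg _ _ _)).1 hsum ω
          (Finset.mem_univ _)
      exact Qf_eq_zero hQ0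
    obtain ⟨h01, h02, h12⟩ := hz
    unfold dev at h01 h02 h12
    have R01 : f (Pw q m ω (Pmap q 0 (q 1)))
        = 2/5 * f (Pw q m ω (q 0)) + 2/5 * f (Pw q m ω (q 1)) + 1/5 * f (Pw q m ω (q 2)) := by
      linarith
    have R10 : f (Pw q m ω (Pmap q 1 (q 0)))
        = 2/5 * f (Pw q m ω (q 1)) + 2/5 * f (Pw q m ω (q 0)) + 1/5 * f (Pw q m ω (q 2)) := by
      rw [Pmap_comm q 1 0]; linarith
    have R02 : f (Pw q m ω (Pmap q 0 (q 2)))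
        = 2/5 * f (Pw q m ω (q 0)) + 2/5 * f (Pw q m ω (q 2)) + 1/5 * f (Pw q m ω (q 1)) := by
      linarith
    have R20 : f (Pw q m ω (Pmap q 2 (q 0)))
        = 2/5 * f (Pw q m ω (q 2)) + 2/5 * f (Pw q m ω (q 0)) + 1/5 * f (Pw q m ω (q 1)) := by
      rw [Pmap_comm q 2 0]; linarith
    have R12 : f (Pw q m ω (Pmap q 1 (q 2)))
        = 2/5 * f (Pw q m ω (q 1)) + 2/5 * f (Pw q m ω (q 2)) + 1/5 * f (Pw q m ω (q 0)) := by
      linarith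
    have R21 : f (Pw q m ω (Pmap q 2 (q 1)))
        = 2/5 * f (Pw q m ω (q 2)) + 2/5 * f (Pw q m ω (q 1)) + 1/5 * f (Pw q m ω (q 0)) := by
      rw [Pmap_comm q 2 1]; linarith
    fin_cases i <;> fin_cases j <;> fin_cases k <;>
      first
        | exact absurd rfl hij
        | exact absurd rfl hjk
        | exact absurd rfl hik
        | exact R01
        | exact R10
        | exact R02
        | exact R20
        | exact R12
        | exact R21
  refine ⟨?_, part2, ?_⟩
  · -- Part 1
    constructor
    · intro hbdd
      by_cases hδ : energy q 1 f = energy q 0 f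
      · exact Or.inl hδ
      · refine Or.inr ?_
        by_contra hge
        push_neg at hge
        have hρ1 : 1 ≤ ρ := by rw [hρ]; linarith
        have hδpos : 0 < energy q 1 f - energy q 0 f :=
          lt_of_le_of_ne hδ0 (fun h' => hδ (by linarith))
        obtain ⟨M, hM⟩ := hbdd
        obtain ⟨n, hn⟩ := exists_nat_gt
          ((M - energy q 0 f) / (energy q 1 f - energy q 0 f))
        have hEn : energy q n f ≤ M := hM (Set.mem_range_self n)
        have hsum : (n : ℝ) ≤ ∑ k ∈ Finset.range n, ρ^k := by
          calc (n : ℝ) = ∑ _k ∈ Finset.range n, (1:ℝ) := by simp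
            _ ≤ ∑ k ∈ Finset.range n, ρ^k :=
              Finset.sum_le_sum fun k _ => one_le_pow₀ hρ1
        have h1 : ((M - energy q 0 f) / (energy q 1 f - energy q 0 f))
            * (energy q 1 f - energy q 0 f) < n * (energy q 1 f - energy q 0 f) :=
          mul_lt_mul_of_pos_right hn hδpos
        rw [div_mul_cancel₀ _ (ne_of_gt hδpos)] at h1
        have h2 : (n:ℝ) * (energy q 1 f - energy q 0 f)
            ≤ (∑ k ∈ Finset.range n, ρ^k) * (energy q 1 f - energy q 0 f) :=
          mul_le_mul_of_nonneg_right hsum hδ0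
        have h3 := hET n
        linarith
    · rintro (hδ | hlt)
      · refine ⟨energy q 0 f, ?_⟩
        rintro x ⟨m, rfl⟩
        have : energy q m f = energy q 0 f := by rw [hET m, hδ]; ring
        exact this.le
      · have hρ1 : ρ < 1 := by rw [hρ]; linarith
        have htends := (hasSum_geometric_of_lt_one hρ0 hρ1).tendsto_sum_nat
        have hmono : Monotone (fun m => ∑ k ∈ Finset.range m, ρ^k) := by
          intro a b hab
          exact Finset.sum_le_sum_of_subset_of_nonneg
            (Finset.range_subset_range.2 hab) (fun k _ _ => pow_nonneg hρ0 k)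
        have hpart : ∀ m : ℕ, ∑ k ∈ Finset.range m, ρ^k ≤ (1-ρ)⁻¹ :=
          hmono.ge_of_tendsto htends
        refine ⟨energy q 0 f + (1-ρ)⁻¹ * (energy q 1 f - energy q 0 f), ?_⟩
        rintro x ⟨m, rfl⟩
        have h2 : (∑ k ∈ Finset.range m, ρ^k) * (energy q 1 f - energy q 0 f)
            ≤ (1-ρ)⁻¹ * (energy q 1 f - energy q 0 f) :=
          mul_le_mul_of_nonneg_right (hpart m) hδ0
        have h3 := hET m
        simp only []
        linarith
  · -- Part 3
    intro hlt
    have hρ1 : ρ < 1 := by rw [hρ]; linarith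
    have htends := (hasSum_geometric_of_lt_one hρ0 hρ1).tendsto_sum_nat
    have h2 : Filter.Tendsto (fun m => energy q 0 f
        + (∑ k ∈ Finset.range m, ρ^k) * (energy q 1 f - energy q 0 f))
        Filter.atTop (nhds (energy q 0 f + (1-ρ)⁻¹ * (energy q 1 f - energy q 0 f))) :=
      ((htends.mul_const _).const_add _)
    have h3 : energy q 0 f + (1-ρ)⁻¹ * (energy q 1 f - energy q 0 f)
        = energy q 0 f + (energy q 1 f - energy q 0 f)
            / (1 - (5/3) * ((d 0)^2 + (d 1)^2 + (d 2)^2)) := by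
      rw [div_eq_mul_inv, mul_comm, hρ]
    rw [← h3]
    exact h2.congr fun m => (hET m).symm

end
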